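/- Fix m ≥ 3 and n ≥ 1, and real numbers c_{ik} for i,k ∈ {1,…,n} with c_{ik} ≤ 0 for k ≠ i and c_{ii} + Σ_{k≠i} c_{ik} > 0 for each i. Define F : ℝⁿ → ℝⁿ by F_i(y) = Σ_k c_{ik} y_k^{m−1}. Then for every q ∈ ℝⁿ, the complementarity problem y ≥ 0, F(y)+q ≥ 0, ⟨y, F(y)+q⟩ = 0 has at most one solution. -/

import Mathlib

/-- Auxiliary contradiction lemma: if `j` maximizes `|y k ^ (m-1) - z k ^ (m-1)|`
and that maximum is positive (attained with `y j > z j`), we get `False`. -/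
lemma ddus_aux (n m : ℕ) (c : Fin n → Fin n → ℝ)
    (hoff : ∀ i k, k ≠ i → c i k ≤ 0)
    (hdom : ∀ i, 0 < c i i + ∑ k ∈ Finset.univ.erase i, c i k)
    (F : (Fin n → ℝ) → Fin n → ℝ)
    (hF : ∀ y i, F y i = ∑ k, c i k * y k ^ (m - 1))
    (q : Fin n → ℝ) (y z : Fin n → ℝ)
    (hy : (∀ i, 0 ≤ y i) ∧ (∀ i, 0 ≤ F y i + q i) ∧ ∑ i, y i * (F y i + q i) = 0)
    (hz : (∀ i, 0 ≤ z i) ∧ (∀ i, 0 ≤ F z i + q i) ∧ ∑ i, z i * (F z i + q i) = 0)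
    (hm1 : m - 1 ≠ 0) (j : Fin n)
    (hmax : ∀ k, |y k ^ (m - 1) - z k ^ (m - 1)| ≤ y j ^ (m - 1) - z j ^ (m - 1))
    (hpos : 0 < y j ^ (m - 1) - z j ^ (m - 1)) : False := by
  obtain ⟨hy0, hyF, hyc⟩ := hy
  obtain ⟨hz0, hzF, hzc⟩ := hz
  set g : Fin n → ℝ := fun k => y k ^ (m - 1) - z k ^ (m - 1) with hg
  -- y j > 0
  have hyj : 0 < y j := by
    rcases lt_or_eq_of_le (hy0 j) with h | h
    · exact h
    · exfalso
      have hyz : y j ^ (m - 1) = 0 := by rw [← h, zero_pow hm1]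
      have hzj := pow_nonneg (hz0 j) (m - 1)
      nlinarith
  -- each complementarity term vanishes
  have hterm : ∀ i ∈ Finset.univ, y i * (F y i + q i) = 0 := by
    rw [← Finset.sum_eq_zero_iff_of_nonneg]
    · exact hyc
    · intro i _
      exact mul_nonneg (hy0 i) (hyF i)
  have hFyj : F y j + q j = 0 := by
    have := hterm j (Finset.mem_univ j)
    rcases mul_eq_zero.mp this with h | h
    · exact absurd h (ne_of_gt hyj)
    · exact h
  have hdiff : F y j - F z j ≤ 0 := by
    have := hzF j
    linarith
  -- compute the difference
  have hcomp : F y j - F z j = ∑ k, c j k * g k := by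
    rw [hF, hF, ← Finset.sum_sub_distrib]
    apply Finset.sum_congr rfl
    intro k _
    simp only [g]
    ring
  -- lower bound each off-diagonal term
  have hlow : ∀ k ∈ Finset.univ.erase j, c j k * g j ≤ c j k * g k := by
    intro k hk
    have hkj : k ≠ j := (Finset.mem_erase.mp hk).1
    have hck := hoff j k hkj
    have : g k ≤ g j := le_trans (le_abs_self _) (hmax k)
    exact mul_le_mul_of_nonpos_left this hck
  have hsum : c j j * g j + ∑ k ∈ Finset.univ.erase j, c j k * g j ≤ ∑ k, c j k * g k := by
    rw [← Finset.add_sum_erase _ (fun k => c j k * g k) (Finset.mem_univ j)]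
    exact add_le_add le_rfl (Finset.sum_le_sum hlow)
  have hexp : (c j j + ∑ k ∈ Finset.univ.erase j, c j k) * g j
      = c j j * g j + ∑ k ∈ Finset.univ.erase j, c j k * g j := by
    rw [add_mul, Finset.sum_mul]
  have hposprod : 0 < (c j j + ∑ k ∈ Finset.univ.erase j, c j k) * g j :=
    mul_pos (hdom j) hpos
  linarith [hcomp ▸ hdiff]

/-- For a strictly diagonally dominant Z-pattern map
F_i(y) = Σ_k c_{ik} y_k^{m-1}, each complementarity problem has at most one solution. -/
theorem diagonally_dominant_unique_solution (n m : ℕ) (hm : 3 ≤ m)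
    (c : Fin n → Fin n → ℝ)
    (hoff : ∀ i k, k ≠ i → c i k ≤ 0)
    (hdom : ∀ i, 0 < c i i + ∑ k ∈ Finset.univ.erase i, c i k)
    (F : (Fin n → ℝ) → Fin n → ℝ)
    (hF : ∀ y i, F y i = ∑ k, c i k * y k ^ (m - 1))
    (q : Fin n → ℝ) (y z : Fin n → ℝ)
    (hy : (∀ i, 0 ≤ y i) ∧ (∀ i, 0 ≤ F y i + q i) ∧ ∑ i, y i * (F y i + q i) = 0)
    (hz : (∀ i, 0 ≤ z i) ∧ (∀ i, 0 ≤ F z i + q i) ∧ ∑ i, z i * (F z i + q i) = 0) :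
    y = z := by
  rcases Nat.eq_zero_or_pos n with hn | hn
  · subst hn; funext i; exact i.elim0
  haveI : Nonempty (Fin n) := Fin.pos_iff_nonempty.mp hn
  have hm1 : m - 1 ≠ 0 := by omega
  -- pick j maximizing |g|
  obtain ⟨j, -, hj⟩ := Finset.exists_max_image Finset.univ
    (fun k => |y k ^ (m - 1) - z k ^ (m - 1)|) Finset.univ_nonempty
  rcases eq_or_lt_of_le (abs_nonneg (y j ^ (m - 1) - z j ^ (m - 1))) with h0 | h0
  · -- all differences vanish
    funext i
    have hi : |y i ^ (m - 1) - z i ^ (m - 1)| ≤ 0 := h0 ▸ hj i (Finset.mem_univ i)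
    have : y i ^ (m - 1) = z i ^ (m - 1) := by
      have := abs_nonpos_iff.mp hi
      linarith [sub_eq_zero.mp this]
    exact (pow_left_strictMonoOn₀ hm1).injOn (hy.1 i) (hz.1 i) this
  · exfalso
    rcases lt_trichotomy (y j ^ (m - 1) - z j ^ (m - 1)) 0 with hlt | heq | hgt
    · -- swap roles: z is "larger" at j
      apply ddus_aux n m c hoff hdom F hF q z y hz hy hm1 j
      · intro k
        have := hj k (Finset.mem_univ k)
        rw [abs_sub_comm] at this
        calc |z k ^ (m - 1) - y k ^ (m - 1)| ≤ |y j ^ (m - 1) - z j ^ (m - 1)| := this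
          _ = z j ^ (m - 1) - y j ^ (m - 1) := by rw [abs_of_neg hlt]; ring
      · linarith
    · rw [heq, abs_zero] at h0; exact lt_irrefl 0 h0
    · exact ddus_aux n m c hoff hdom F hF q y z
        ⟨hy.1, hy.2.1, hy.2.2⟩ ⟨hz.1, hz.2.1, hz.2.2⟩ hm1 j
        (fun k => (hj k (Finset.mem_univ k)).trans (le_of_eq (abs_of_pos hgt))) hgt
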